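/- Let Ω ⊂ ℝ^d be a bounded measurable set, 1 < r ≤ q, r' := r/(r-1). Then for every m ∈ L^q(Ω) and w ∈ L^q(Ω;ℝ^d) one has, as extended reals, ∫_Ω ℓ_r(m(x),w(x)) dx = sup{ ∫_Ω ( a(x) m(x) + b(x)·w(x) ) dx : a ∈ L^∞(Ω), b ∈ L^∞(Ω;ℝ^d), a(x) + (1/r')|b(x)|^{r'} ≤ 0 for a.e. x ∈ Ω }. -/

import Mathlib

open MeasureTheory
open scoped RealInnerProductSpace Classical ENNReal

/-- The function `ℓ_r`, with values in `[0,∞]`. -/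
noncomputable def ellENN (r : ℝ) (d : ℕ) (a : ℝ) (b : EuclideanSpace ℝ (Fin d)) : ℝ≥0∞ :=
  if 0 < a then ENNReal.ofReal ((1 / r) * ‖b‖ ^ r / a ^ (r - 1))
  else if a = 0 ∧ b = 0 then 0
  else ⊤

private lemma ell_norm_smul {d : ℕ} {r : ℝ} (hr : 1 < r) {a : ℝ} (ha : 0 < a)
    (b : EuclideanSpace ℝ (Fin d)) :
    ‖((‖b‖ / a) ^ (r - 1) * ‖b‖⁻¹) • b‖ = (‖b‖ / a) ^ (r - 1) := by
  by_cases hb : b = 0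
  · simp [hb, Real.zero_rpow (by linarith : r - 1 ≠ 0)]
  · have hbn : (0:ℝ) < ‖b‖ := norm_pos_iff.2 hb
    rw [norm_smul, Real.norm_eq_abs, abs_of_nonneg (by positivity)]
    rw [mul_assoc, inv_mul_cancel₀ hbn.ne', mul_one]

private lemma ell_attain {d : ℕ} {r : ℝ} (hr : 1 < r) {a : ℝ} (ha : 0 < a)
    (b : EuclideanSpace ℝ (Fin d)) :
    -(1 / (r / (r - 1))) * (‖b‖ / a) ^ r * a
      + ⟪(((‖b‖ / a) ^ (r - 1) * ‖b‖⁻¹) • b : EuclideanSpace ℝ (Fin d)), b⟫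
      = 1 / r * ‖b‖ ^ r / a ^ (r - 1) := by
  have hr0 : r ≠ 0 := by linarith
  have hr1 : r - 1 ≠ 0 := by linarith
  rw [real_inner_smul_left, real_inner_self_eq_norm_sq]
  by_cases hb : b = 0
  · simp [hb, Real.zero_rpow hr0, Real.zero_rpow hr1]
  · have hu : (0:ℝ) < ‖b‖ := norm_pos_iff.2 hb
    have e0 : 1 / (r / (r-1)) = (r-1)/r := one_div_div _ _
    have e1 : (‖b‖ / a) ^ r = ‖b‖ ^ r / a ^ r := Real.div_rpow (norm_nonneg b) ha.le r
    have e2 : (‖b‖ / a) ^ (r-1) = ‖b‖ ^ (r-1) / a ^ (r-1) := Real.div_rpow (norm_nonneg b) ha.le _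
    have e3 : a ^ r = a ^ (r-1) * a := by
      nth_rewrite 1 [show r = (r-1) + 1 by ring]
      rw [Real.rpow_add ha, Real.rpow_one]
    have e4 : ‖b‖ ^ r = ‖b‖ ^ (r-1) * ‖b‖ := by
      nth_rewrite 1 [show r = (r-1) + 1 by ring]
      rw [Real.rpow_add hu, Real.rpow_one]
    have ha1 : a ^ (r-1) ≠ 0 := by positivity
    have hu1 : ‖b‖ ^ (r-1) ≠ 0 := by positivity
    rw [e0, e1, e2, e3, e4]
    field_simp
    ring

private lemma ell_young {d : ℕ} {r : ℝ} (hr : 1 < r) {a α : ℝ}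
    {b β : EuclideanSpace ℝ (Fin d)} (ha : 0 < a)
    (hc : α + 1 / (r / (r - 1)) * ‖β‖ ^ (r / (r - 1)) ≤ 0) :
    α * a + ⟪β, b⟫ ≤ 1 / r * ‖b‖ ^ r / a ^ (r - 1) := by
  have hconj : r.HolderConjugate (r/(r-1)) := Real.HolderConjugate.conjExponent hr
  have hr0 : r ≠ 0 := by linarith
  have hr1 : r - 1 ≠ 0 := by linarith
  set r' := r / (r - 1) with hr'
  have h1 : α * a ≤ -(1/r' * ‖β‖ ^ r') * a :=
    mul_le_mul_of_nonneg_right (by linarith) ha.le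
  have h2 : ⟪β, b⟫ ≤ ‖β‖ * ‖b‖ := real_inner_le_norm β b
  have hs : (0:ℝ) ≤ ‖b‖ / a ^ ((r-1)/r) := by positivity
  have ht : (0:ℝ) ≤ ‖β‖ * a ^ ((r-1)/r) := by positivity
  have hY := Real.young_inequality_of_nonneg hs ht hconj
  have hane : a ^ ((r-1)/r) ≠ 0 := by positivity
  have e1 : ‖b‖ / a ^ ((r-1)/r) * (‖β‖ * a ^ ((r-1)/r)) = ‖β‖ * ‖b‖ := by
    field_simp
  have e2 : (‖b‖ / a ^ ((r-1)/r)) ^ r = ‖b‖ ^ r / a ^ (r-1) := by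
    rw [Real.div_rpow (norm_nonneg b) (by positivity)]
    congr 1
    rw [← Real.rpow_mul ha.le]
    congr 1
    field_simp
  have e3 : (‖β‖ * a ^ ((r-1)/r)) ^ r' = ‖β‖ ^ r' * a := by
    rw [Real.mul_rpow (norm_nonneg β) (by positivity), ← Real.rpow_mul ha.le]
    have : (r-1)/r * r' = 1 := by rw [hr']; field_simp
    rw [this, Real.rpow_one]
  rw [e1, e2, e3] at hY
  have e4 : ‖β‖ ^ r' * a / r' = (1/r' * ‖β‖ ^ r') * a := by ring
  have e5 : ‖b‖ ^ r / a ^ (r-1) / r = 1/r * ‖b‖ ^ r / a ^ (r-1) := by ring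
  rw [e4, e5] at hY
  linarith

private lemma toReal_coe_le_ereal (L : ℝ≥0∞) : ((L.toReal : ℝ) : EReal) ≤ (L : EReal) := by
  by_cases h : L = ⊤
  · simp [h]
  · conv_rhs => rw [← ENNReal.ofReal_toReal h]
    rw [EReal.coe_ennreal_ofReal]
    exact le_max_left (L.toReal : EReal) (0 : EReal)

set_option maxHeartbeats 1000000 in
theorem stmt_3 (d : ℕ) (Ω : Set (EuclideanSpace ℝ (Fin d)))
    (hΩmeas : MeasurableSet Ω) (hΩbdd : Bornology.IsBounded Ω)
    (q r : ℝ) (hr : 1 < r) (hrq : r ≤ q)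
    (m : EuclideanSpace ℝ (Fin d) → ℝ)
    (w : EuclideanSpace ℝ (Fin d) → EuclideanSpace ℝ (Fin d))
    (hm : MemLp m (ENNReal.ofReal q) (volume.restrict Ω))
    (hw : MemLp w (ENNReal.ofReal q) (volume.restrict Ω)) :
    ((∫⁻ x in Ω, ellENN r d (m x) (w x) : ℝ≥0∞) : EReal) =
      sSup {y : EReal | ∃ a : EuclideanSpace ℝ (Fin d) → ℝ,
        ∃ b : EuclideanSpace ℝ (Fin d) → EuclideanSpace ℝ (Fin d),
        Measurable a ∧ Measurable b ∧
        (∃ C : ℝ, ∀ᵐ x ∂volume.restrict Ω, |a x| ≤ C ∧ ‖b x‖ ≤ C) ∧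
        (∀ᵐ x ∂volume.restrict Ω,
          a x + (1 / (r / (r - 1))) * ‖b x‖ ^ (r / (r - 1)) ≤ 0) ∧
        y = ((∫ x in Ω, (a x * m x + ⟪b x, w x⟫) : ℝ) : EReal)} := by
  classical
  set μ := volume.restrict Ω with hμdef
  haveI hμfin : IsFiniteMeasure μ :=
    ⟨by rw [hμdef, Measure.restrict_apply_univ]; exact hΩbdd.measure_lt_top⟩
  have hr0 : r ≠ 0 := by linarith
  have hr1 : r - 1 ≠ 0 := by linarith
  have hrnn : (0:ℝ) ≤ r := by linarith
  have hr'pos : 0 < r / (r - 1) := by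
    apply div_pos <;> linarith
  have hr'ne : r / (r - 1) ≠ 0 := hr'pos.ne'
  have hr'inv : (0:ℝ) ≤ 1 / (r / (r-1)) := by positivity
  have hq1 : (1:ℝ≥0∞) ≤ ENNReal.ofReal q := by
    rw [ENNReal.one_le_ofReal]; linarith
  have hmint : Integrable m μ := hm.integrable hq1
  have hwint : Integrable w μ := hw.integrable hq1
  obtain ⟨m', hm'sm, hmm⟩ := hm.1
  obtain ⟨w', hw'sm, hww⟩ := hw.1
  have hm'meas : Measurable m' := hm'sm.measurable
  have hw'meas : Measurable w' := hw'sm.measurable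
  have hm'int : Integrable m' μ := hmint.congr hmm
  have hw'int : Integrable w' μ := hwint.congr hww
  have key_meas : Measurable (fun x => ellENN r d (m' x) (w' x)) := by
    unfold ellENN
    have h1 : MeasurableSet {x | 0 < m' x} := measurableSet_lt measurable_const hm'meas
    have h2 : MeasurableSet {x | m' x = 0 ∧ w' x = 0} :=
      (hm'meas (measurableSet_singleton 0)).inter (hw'meas (measurableSet_singleton 0))
    refine Measurable.ite h1 ?_ (Measurable.ite h2 measurable_const measurable_const)
    refine ENNReal.measurable_ofReal.comp ?_
    exact (measurable_const.mul
        ((Real.continuous_rpow_const hrnn).measurable.comp hw'meas.norm)).div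
      ((Real.continuous_rpow_const (by linarith : (0:ℝ) ≤ r - 1)).measurable.comp hm'meas)
  have key_int : ∀ (a : EuclideanSpace ℝ (Fin d) → ℝ)
      (b : EuclideanSpace ℝ (Fin d) → EuclideanSpace ℝ (Fin d)) (C : ℝ),
      Measurable a → Measurable b → (∀ᵐ x ∂μ, |a x| ≤ C ∧ ‖b x‖ ≤ C) →
      Integrable (fun x => a x * m' x + ⟪b x, w' x⟫) μ := by
    intro a b C hameas hbmeas hC
    have hsm : AEStronglyMeasurable (fun x => a x * m' x + ⟪b x, w' x⟫) μ :=
      ((hameas.mul hm'meas).add (hbmeas.inner hw'meas)).aestronglyMeasurable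
    refine Integrable.mono' ((hm'int.abs.add hw'int.norm).const_mul |C|) hsm ?_
    filter_upwards [hC] with x hx
    obtain ⟨h1, h2⟩ := hx
    have hC0 : 0 ≤ C := le_trans (abs_nonneg _) h1
    have e1 : ‖a x * m' x + ⟪b x, w' x⟫‖ ≤ |a x * m' x| + |⟪b x, w' x⟫| := abs_add_le _ _
    have e2 : |a x * m' x| ≤ C * |m' x| := by
      rw [abs_mul]; exact mul_le_mul_of_nonneg_right h1 (abs_nonneg _)
    have e3 : |⟪b x, w' x⟫| ≤ C * ‖w' x‖ := by
      refine le_trans (abs_real_inner_le_norm _ _) ?_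
      exact mul_le_mul_of_nonneg_right h2 (norm_nonneg _)
    have e4 : C * |m' x| + C * ‖w' x‖ = |C| * (|m' x| + ‖w' x‖) := by
      rw [abs_of_nonneg hC0]; ring
    calc ‖a x * m' x + ⟪b x, w' x⟫‖ ≤ |a x * m' x| + |⟪b x, w' x⟫| := e1
      _ ≤ C * |m' x| + C * ‖w' x‖ := add_le_add e2 e3
      _ = |C| * (|m' x| + ‖w' x‖) := e4
  have hLc : (∫⁻ x, ellENN r d (m x) (w x) ∂μ) = ∫⁻ x, ellENN r d (m' x) (w' x) ∂μ := by
    apply lintegral_congr_ae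
    filter_upwards [hmm, hww] with x h1 h2
    rw [h1, h2]
  rw [hLc]
  refine le_antisymm ?hle ?hge
  case hge =>
    apply sSup_le
    rintro y ⟨a, b, hameas, hbmeas, ⟨C, hC⟩, hcon, rfl⟩
    by_cases hLtop : (∫⁻ x, ellENN r d (m' x) (w' x) ∂μ) = ⊤
    · rw [hLtop]; exact le_top
    have hae : ∀ᵐ x ∂μ, ellENN r d (m' x) (w' x) < ⊤ := ae_lt_top key_meas hLtop
    have hint1 : Integrable (fun x => a x * m' x + ⟪b x, w' x⟫) μ :=
      key_int a b C hameas hbmeas hC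
    have hint2 : Integrable (fun x => (ellENN r d (m' x) (w' x)).toReal) μ :=
      integrable_toReal_of_lintegral_ne_top key_meas.aemeasurable hLtop
    have hptwise : ∀ᵐ x ∂μ,
        a x * m' x + ⟪b x, w' x⟫ ≤ (ellENN r d (m' x) (w' x)).toReal := by
      filter_upwards [hae, hcon] with x hx hcx
      by_cases hmx : 0 < m' x
      · have hell : ellENN r d (m' x) (w' x)
            = ENNReal.ofReal (1 / r * ‖w' x‖ ^ r / (m' x) ^ (r-1)) := by
          simp only [ellENN, if_pos hmx]
        rw [hell, ENNReal.toReal_ofReal (by positivity)]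
        exact ell_young hr hmx hcx
      · have h00 : m' x = 0 ∧ w' x = 0 := by
          by_contra h
          simp only [ellENN, if_neg hmx, if_neg h] at hx
          exact absurd hx (lt_irrefl ⊤)
        rw [h00.1, h00.2]
        simp [ellENN, hmx]
    have hIc : ∫ x, (a x * m x + ⟪b x, w x⟫) ∂μ
        = ∫ x, (a x * m' x + ⟪b x, w' x⟫) ∂μ := by
      apply integral_congr_ae
      filter_upwards [hmm, hww] with x h1 h2
      rw [h1, h2]
    have hle1 : ∫ x, (a x * m' x + ⟪b x, w' x⟫) ∂μ
        ≤ (∫⁻ x, ellENN r d (m' x) (w' x) ∂μ).toReal := by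
      rw [← integral_toReal key_meas.aemeasurable hae]
      exact integral_mono_ae hint1 hint2 hptwise
    calc ((∫ x, (a x * m x + ⟪b x, w x⟫) ∂μ : ℝ) : EReal)
        = ((∫ x, (a x * m' x + ⟪b x, w' x⟫) ∂μ : ℝ) : EReal) := by rw [hIc]
      _ ≤ (((∫⁻ x, ellENN r d (m' x) (w' x) ∂μ).toReal : ℝ) : EReal) :=
          EReal.coe_le_coe_iff.2 hle1
      _ ≤ ((∫⁻ x, ellENN r d (m' x) (w' x) ∂μ : ℝ≥0∞) : EReal) := toReal_coe_le_ereal _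
  case hle =>
    by_cases hbad : μ {x | ¬ (0 < m' x ∨ (m' x = 0 ∧ w' x = 0))} = 0
    · -- good case
      have hgood : ∀ᵐ x ∂μ, 0 < m' x ∨ (m' x = 0 ∧ w' x = 0) := by
        rw [MeasureTheory.ae_iff]
        exact hbad
      set g : EuclideanSpace ℝ (Fin d) → ℝ :=
        fun x => 1 / r * ‖w' x‖ ^ r / (m' x) ^ (r - 1) with hg
      set S : ℕ → Set (EuclideanSpace ℝ (Fin d)) :=
        fun n => {x | 1/((n:ℝ)+1) < m' x ∧ ‖w' x‖ ≤ (n:ℝ)} with hS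
      have hSmeas : ∀ n, MeasurableSet (S n) := fun n =>
        (measurableSet_lt measurable_const hm'meas).inter
          (measurableSet_le hw'meas.norm measurable_const)
      have hSpos : ∀ n x, x ∈ S n → 0 < m' x := fun n x hx =>
        lt_trans (by positivity) hx.1
      have hSmono : Monotone S := by
        intro i j hij x hx
        refine ⟨lt_of_le_of_lt ?_ hx.1, hx.2.trans (Nat.cast_le.2 hij)⟩
        apply one_div_le_one_div_of_le (by positivity)
        have : (i:ℝ) ≤ (j:ℝ) := Nat.cast_le.2 hij
        linarith
      set A : ℕ → EuclideanSpace ℝ (Fin d) → ℝ := fun n x =>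
        if x ∈ S n then -(1 / (r/(r-1)) * (‖w' x‖ / m' x) ^ r) else 0 with hA
      set B : ℕ → EuclideanSpace ℝ (Fin d) → EuclideanSpace ℝ (Fin d) := fun n x =>
        if x ∈ S n then ((‖w' x‖ / m' x) ^ (r - 1) * ‖w' x‖⁻¹) • w' x else 0 with hB
      have hrm : Measurable fun x => ‖w' x‖ / m' x := hw'meas.norm.div hm'meas
      have hAmeas : ∀ n, Measurable (A n) := fun n =>
        Measurable.ite (hSmeas n)
          ((measurable_const.mul
            ((Real.continuous_rpow_const hrnn).measurable.comp hrm)).neg)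
          measurable_const
      have hBmeas : ∀ n, Measurable (B n) := fun n =>
        Measurable.ite (hSmeas n)
          (((((Real.continuous_rpow_const (by linarith : (0:ℝ) ≤ r - 1)).measurable.comp
            hrm).mul hw'meas.norm.inv)).smul hw'meas)
          measurable_const
      have hXle : ∀ n x, x ∈ S n → ‖w' x‖ / m' x ≤ (n:ℝ) * ((n:ℝ)+1) := by
        intro n x hx
        have h1 : 0 < m' x := hSpos n x hx
        rw [div_le_iff₀ h1]
        have h2 : 1/((n:ℝ)+1) < m' x := hx.1
        have h3 : 1 < ((n:ℝ)+1) * m' x := by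
          rw [div_lt_iff₀ (by positivity)] at h2
          linarith
        have h4 := mul_le_mul_of_nonneg_left h3.le (Nat.cast_nonneg n : (0:ℝ) ≤ n)
        rw [mul_one] at h4
        calc ‖w' x‖ ≤ (n:ℝ) := hx.2
          _ ≤ (n:ℝ) * (((n:ℝ)+1) * m' x) := h4
          _ = (n:ℝ) * ((n:ℝ)+1) * m' x := by ring
      have hBnorm : ∀ n x, x ∈ S n → ‖B n x‖ = (‖w' x‖ / m' x) ^ (r-1) := by
        intro n x hx
        simp only [hB, if_pos hx]
        exact ell_norm_smul hr (hSpos n x hx) (w' x)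
      set Cn : ℕ → ℝ := fun n =>
        1/(r/(r-1)) * ((n:ℝ)*((n:ℝ)+1))^r + ((n:ℝ)*((n:ℝ)+1))^(r-1) with hCn
      have hCbound : ∀ n, ∀ᵐ x ∂μ, |A n x| ≤ Cn n ∧ ‖B n x‖ ≤ Cn n := by
        intro n
        refine ae_of_all _ fun x => ?_
        simp only [hCn]
        have hK : (0:ℝ) ≤ (n:ℝ)*((n:ℝ)+1) := by positivity
        have t1 : (0:ℝ) ≤ 1/(r/(r-1)) * ((n:ℝ)*((n:ℝ)+1))^r := by
          have := Real.rpow_nonneg hK r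
          positivity
        have t2 : (0:ℝ) ≤ ((n:ℝ)*((n:ℝ)+1))^(r-1) := Real.rpow_nonneg hK _
        by_cases hx : x ∈ S n
        · have h1 := hSpos n x hx
          have hX0 : (0:ℝ) ≤ ‖w' x‖ / m' x := by positivity
          constructor
          · simp only [hA, if_pos hx, abs_neg]
            rw [abs_of_nonneg (by positivity)]
            have h5 : (‖w' x‖ / m' x) ^ r ≤ ((n:ℝ)*((n:ℝ)+1))^r :=
              Real.rpow_le_rpow hX0 (hXle n x hx) hrnn
            have h6 := mul_le_mul_of_nonneg_left h5 hr'inv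
            linarith
          · rw [hBnorm n x hx]
            have h5 : (‖w' x‖ / m' x) ^ (r-1) ≤ ((n:ℝ)*((n:ℝ)+1))^(r-1) :=
              Real.rpow_le_rpow hX0 (hXle n x hx) (by linarith)
            linarith
        · constructor
          · simp only [hA, if_neg hx, abs_zero]; linarith
          · simp only [hB, if_neg hx, norm_zero]; linarith
      have hconstraint : ∀ n x, A n x + 1 / (r/(r-1)) * ‖B n x‖ ^ (r/(r-1)) ≤ 0 := by
        intro n x
        by_cases hx : x ∈ S n
        · have h1 : 0 < m' x := hSpos n x hx
          rw [hBnorm n x hx]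
          simp only [hA, if_pos hx]
          rw [← Real.rpow_mul (by positivity),
            (show (r-1) * (r/(r-1)) = r by field_simp)]
          exact le_of_eq (by ring)
        · simp only [hA, hB, if_neg hx, norm_zero, Real.zero_rpow hr'ne, mul_zero,
            add_zero, le_refl, zero_add]
      have hval : ∀ n x, A n x * m' x + ⟪B n x, w' x⟫ = (S n).indicator g x := by
        intro n x
        by_cases hx : x ∈ S n
        · rw [Set.indicator_of_mem hx]
          simp only [hA, hB, if_pos hx, hg]
          rw [(show -(1 / (r/(r-1)) * (‖w' x‖ / m' x) ^ r) * m' x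
            = -(1 / (r/(r-1))) * (‖w' x‖ / m' x) ^ r * m' x by ring)]
          exact ell_attain hr (hSpos n x hx) (w' x)
        · rw [Set.indicator_of_notMem hx]
          simp only [hA, hB, if_neg hx, zero_mul, inner_zero_left, add_zero]
      have hintn : ∀ n, Integrable ((S n).indicator g) μ := by
        intro n
        exact (key_int (A n) (B n) (Cn n) (hAmeas n) (hBmeas n) (hCbound n)).congr
          (ae_of_all _ fun x => hval n x)
      set v : ℕ → ℝ := fun n => ∫ x, (S n).indicator g x ∂μ with hv
      have hgnn : ∀ n x, 0 ≤ (S n).indicator g x := by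
        intro n x
        refine Set.indicator_nonneg (fun y hy => ?_) x
        have := hSpos n y hy
        rw [hg]
        positivity
      have hvnn : ∀ n, 0 ≤ v n := fun n => integral_nonneg (hgnn n)
      have hmemS : ∀ n, ((v n : ℝ) : EReal) ∈ {y : EReal |
          ∃ a : EuclideanSpace ℝ (Fin d) → ℝ,
          ∃ b : EuclideanSpace ℝ (Fin d) → EuclideanSpace ℝ (Fin d),
          Measurable a ∧ Measurable b ∧
          (∃ C : ℝ, ∀ᵐ x ∂μ, |a x| ≤ C ∧ ‖b x‖ ≤ C) ∧
          (∀ᵐ x ∂μ, a x + (1 / (r / (r - 1))) * ‖b x‖ ^ (r / (r - 1)) ≤ 0) ∧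
          y = ((∫ x, (a x * m x + ⟪b x, w x⟫) ∂μ : ℝ) : EReal)} := by
        intro n
        refine ⟨A n, B n, hAmeas n, hBmeas n, ⟨Cn n, hCbound n⟩,
          ae_of_all _ (hconstraint n), ?_⟩
        have heq : ∫ x, (A n x * m x + ⟪B n x, w x⟫) ∂μ = v n := by
          rw [hv]
          apply integral_congr_ae
          filter_upwards [hmm, hww] with x h1 h2
          rw [h1, h2, hval n x]
        rw [heq]
      set F : ℕ → EuclideanSpace ℝ (Fin d) → ℝ≥0∞ := fun n =>
        (S n).indicator (fun x => ellENN r d (m' x) (w' x)) with hF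
      have hFeq : ∀ n, ∫⁻ x, F n x ∂μ = ENNReal.ofReal (v n) := by
        intro n
        rw [hv, MeasureTheory.ofReal_integral_eq_lintegral_ofReal (hintn n)
          (ae_of_all _ (hgnn n))]
        apply lintegral_congr
        intro x
        by_cases hx : x ∈ S n
        · simp only [hF, Set.indicator_of_mem hx]
          simp only [ellENN, if_pos (hSpos n x hx), hg]
        · simp only [hF, Set.indicator_of_notMem hx, ENNReal.ofReal_zero]
      have hFmono : Monotone F := by
        intro i j hij x
        exact Set.indicator_le_indicator_of_subset (hSmono hij) (fun a => zero_le) x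
      have hFsup : ∀ x, (0 < m' x ∨ (m' x = 0 ∧ w' x = 0)) →
          (⨆ n, F n x) = ellENN r d (m' x) (w' x) := by
        intro x hx
        rcases hx with hpos | hzero
        · obtain ⟨n1, hn1⟩ := exists_nat_gt (1 / m' x)
          obtain ⟨n2, hn2⟩ := exists_nat_ge ‖w' x‖
          have hxS : x ∈ S (max n1 n2) := by
            have hc1 : (n1:ℝ) ≤ ((max n1 n2 : ℕ):ℝ) := Nat.cast_le.2 (le_max_left _ _)
            have hc2 : (n2:ℝ) ≤ ((max n1 n2 : ℕ):ℝ) := Nat.cast_le.2 (le_max_right _ _)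
            constructor
            · rw [div_lt_iff₀ (by positivity)]
              rw [div_lt_iff₀ hpos] at hn1
              nlinarith
            · exact hn2.trans hc2
          refine le_antisymm (iSup_le fun n => Set.indicator_le_self _ _ x) ?_
          refine le_iSup_of_le (max n1 n2) ?_
          have hee : (S (max n1 n2)).indicator
              (fun x => ellENN r d (m' x) (w' x)) x = ellENN r d (m' x) (w' x) :=
            Set.indicator_of_mem hxS _
          exact hee.ge
        · have h0 : ellENN r d (m' x) (w' x) = 0 := by
            simp [ellENN, hzero.1, hzero.2]
          rw [h0]
          refine le_antisymm ?_ (zero_le)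
          refine iSup_le fun n => ?_
          calc F n x ≤ ellENN r d (m' x) (w' x) := Set.indicator_le_self _ _ x
            _ = 0 := h0
      have hLsup : ∫⁻ x, ellENN r d (m' x) (w' x) ∂μ = ⨆ n, ENNReal.ofReal (v n) := by
        have h1 : ∫⁻ x, ellENN r d (m' x) (w' x) ∂μ = ∫⁻ x, ⨆ n, F n x ∂μ := by
          apply lintegral_congr_ae
          filter_upwards [hgood] with x hx
          exact (hFsup x hx).symm
        rw [h1, lintegral_iSup (fun n => key_meas.indicator (hSmeas n)) hFmono]
        exact iSup_congr hFeq
      rw [hLsup]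
      apply le_of_forall_lt_imp_le_of_dense
      intro z hz
      induction z using EReal.rec with
      | bot => exact bot_le
      | coe c =>
        rcases le_or_gt c 0 with hc | hc
        · refine le_trans ?_ (le_sSup (hmemS 0))
          exact EReal.coe_le_coe_iff.2 (hc.trans (hvnn 0))
        · have h2 : (ENNReal.ofReal c : EReal)
              < ((⨆ n, ENNReal.ofReal (v n) : ℝ≥0∞) : EReal) := by
            rw [EReal.coe_ennreal_ofReal, max_eq_left hc.le]
            exact hz
          rw [EReal.coe_ennreal_lt_coe_ennreal_iff] at h2
          obtain ⟨n, hn⟩ := lt_iSup_iff.1 h2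
          have hcv : c < v n := by
            rwa [ENNReal.ofReal_lt_ofReal_iff_of_nonneg hc.le] at hn
          exact le_trans (EReal.coe_le_coe_iff.2 hcv.le) (le_sSup (hmemS n))
      | top => exact absurd hz (by simp)
    · -- bad case
      have hGm : MeasurableSet {x | 0 < m' x} := measurableSet_lt measurable_const hm'meas
      have hZm : MeasurableSet {x | m' x = 0 ∧ w' x = 0} :=
        (hm'meas (measurableSet_singleton 0)).inter (hw'meas (measurableSet_singleton 0))
      have hBadmeas : MeasurableSet {x | ¬ (0 < m' x ∨ (m' x = 0 ∧ w' x = 0))} := by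
        have he : {x | ¬ (0 < m' x ∨ (m' x = 0 ∧ w' x = 0))}
            = ({x | 0 < m' x} ∪ {x | m' x = 0 ∧ w' x = 0})ᶜ := by
          ext x; simp [Set.mem_union, not_or]
        rw [he]; exact (hGm.union hZm).compl
      have htop : ∫⁻ x, ellENN r d (m' x) (w' x) ∂μ = ⊤ := by
        refine top_le_iff.1 ?_
        calc (⊤:ℝ≥0∞) = ⊤ * μ {x | ¬ (0 < m' x ∨ (m' x = 0 ∧ w' x = 0))} :=
              (ENNReal.top_mul hbad).symm
          _ = ∫⁻ _ in {x | ¬ (0 < m' x ∨ (m' x = 0 ∧ w' x = 0))}, ⊤ ∂μ :=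
              (setLIntegral_const _ ⊤).symm
          _ = ∫⁻ x in {x | ¬ (0 < m' x ∨ (m' x = 0 ∧ w' x = 0))},
                ellENN r d (m' x) (w' x) ∂μ := by
              refine setLIntegral_congr_fun hBadmeas (fun x hx => ?_)
              rcases not_or.1 hx with ⟨h1, h2⟩
              simp [ellENN, h1, h2]
          _ ≤ ∫⁻ x, ellENN r d (m' x) (w' x) ∂μ := setLIntegral_le_lintegral _ _
      rw [htop, EReal.coe_ennreal_top, top_le_iff, sSup_eq_top]
      intro y hy
      obtain ⟨c, hc⟩ : ∃ c : ℝ, y ≤ (c : EReal) := by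
        induction y using EReal.rec with
        | bot => exact ⟨0, bot_le⟩
        | coe c => exact ⟨c, le_refl _⟩
        | top => exact absurd hy (lt_irrefl ⊤)
      have hsplit : μ {x | m' x < 0} ≠ 0 ∨ μ {x | m' x = 0 ∧ w' x ≠ 0} ≠ 0 := by
        by_contra h
        push_neg at h
        apply hbad
        refine measure_mono_null ?_ (measure_union_null h.1 h.2)
        intro x hx
        rcases not_or.1 hx with ⟨h1, h2⟩
        rcases lt_or_eq_of_le (not_lt.1 h1) with h3 | h3
        · exact Or.inl h3
        · exact Or.inr ⟨h3, fun hw0 => h2 ⟨h3, hw0⟩⟩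
      rcases hsplit with hB1 | hB2
      · -- m' < 0 on a set of positive measure
        obtain ⟨k, hk⟩ : ∃ k : ℕ, μ {x | m' x ≤ -(1/((k:ℝ)+1))} ≠ 0 := by
          by_contra h
          push_neg at h
          apply hB1
          refine measure_mono_null ?_ ((measure_iUnion_null_iff).2 fun k => h k)
          intro x hx
          obtain ⟨k, hk2⟩ := exists_nat_gt (1 / (-(m' x)))
          have hmx : 0 < -(m' x) := neg_pos.2 hx
          refine Set.mem_iUnion.2 ⟨k, ?_⟩
          have h5 : 1 / ((k:ℝ)+1) < -(m' x) := by
            rw [div_lt_iff₀ (by positivity)]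
            rw [div_lt_iff₀ hmx] at hk2
            nlinarith
          simp only [Set.mem_setOf_eq]
          linarith
        set ε : ℝ := 1/((k:ℝ)+1) with hε
        have hεpos : 0 < ε := by positivity
        set T := {x | m' x ≤ -ε} with hT
        have hTmeas : MeasurableSet T := measurableSet_le hm'meas measurable_const
        have hTfin : μ T ≠ ⊤ := (measure_lt_top μ T).ne
        have hτpos : 0 < (μ T).toReal := ENNReal.toReal_pos hk hTfin
        set τ := (μ T).toReal with hτ
        have hIT : ∫ x in T, m' x ∂μ ≤ -ε * τ := by
          have h6 : ∫ x in T, m' x ∂μ ≤ ∫ _ in T, (-ε) ∂μ := by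
            refine setIntegral_mono_on hm'int.integrableOn
              (integrableOn_const (measure_lt_top μ T).ne) hTmeas ?_
            intro x hx; exact hx
          rw [setIntegral_const, smul_eq_mul, mul_comm] at h6
          exact h6
        obtain ⟨n, hn⟩ := exists_nat_gt (c / (ε * τ))
        have hcn : c < (n:ℝ) * (ε * τ) := by
          rw [div_lt_iff₀ (by positivity)] at hn
          linarith
        refine ⟨_, ⟨T.indicator (fun _ => -(n:ℝ)), fun _ => 0,
          measurable_const.indicator hTmeas, measurable_const, ⟨(n:ℝ), ?_⟩, ?_, rfl⟩, ?_⟩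
        · refine ae_of_all _ fun x => ⟨?_, by simp⟩
          by_cases hx : x ∈ T
          · simp [Set.indicator_of_mem hx]
          · simp [Set.indicator_of_notMem hx]
        · refine ae_of_all _ fun x => ?_
          rw [norm_zero, Real.zero_rpow hr'ne, mul_zero, add_zero]
          by_cases hx : x ∈ T
          · rw [Set.indicator_of_mem hx]
            have := (Nat.cast_nonneg n : (0:ℝ) ≤ n)
            linarith
          · rw [Set.indicator_of_notMem hx]
        · have hVeq : ∫ x, (T.indicator (fun _ => -(n:ℝ)) x * m x
              + ⟪(0 : EuclideanSpace ℝ (Fin d)), w x⟫) ∂μ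
              = ∫ x in T, (-(n:ℝ)) * m' x ∂μ := by
            rw [← integral_indicator hTmeas]
            apply integral_congr_ae
            filter_upwards [hmm] with x h1
            rw [inner_zero_left, add_zero, h1]
            by_cases hx : x ∈ T
            · simp [Set.indicator_of_mem hx]
            · simp [Set.indicator_of_notMem hx]
          have hV2 : (n:ℝ) * (ε * τ) ≤ ∫ x in T, (-(n:ℝ)) * m' x ∂μ := by
            rw [integral_const_mul]
            have h7 := mul_le_mul_of_nonneg_left hIT ((Nat.cast_nonneg n : (0:ℝ) ≤ n))
            nlinarith
          refine lt_of_le_of_lt hc ?_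
          rw [hVeq]
          exact EReal.coe_lt_coe_iff.2 (lt_of_lt_of_le hcn hV2)
      · -- m' = 0, w' ≠ 0 on a set of positive measure
        obtain ⟨k, hk⟩ : ∃ k : ℕ, μ {x | m' x = 0 ∧ 1/((k:ℝ)+1) ≤ ‖w' x‖} ≠ 0 := by
          by_contra h
          push_neg at h
          apply hB2
          refine measure_mono_null ?_ ((measure_iUnion_null_iff).2 fun k => h k)
          intro x hx
          obtain ⟨k, hk2⟩ := exists_nat_gt (1 / ‖w' x‖)
          have hwx : 0 < ‖w' x‖ := norm_pos_iff.2 hx.2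
          refine Set.mem_iUnion.2 ⟨k, ?_⟩
          have h5 : 1 / ((k:ℝ)+1) ≤ ‖w' x‖ := by
            rw [div_le_iff₀ (by positivity)]
            rw [div_lt_iff₀ hwx] at hk2
            nlinarith
          exact ⟨hx.1, h5⟩
        set ε : ℝ := 1/((k:ℝ)+1) with hε
        have hεpos : 0 < ε := by positivity
        set T := {x | m' x = 0 ∧ ε ≤ ‖w' x‖} with hT
        have hTmeas : MeasurableSet T :=
          (hm'meas (measurableSet_singleton 0)).inter
            (measurableSet_le measurable_const hw'meas.norm)
        have hTfin : μ T ≠ ⊤ := (measure_lt_top μ T).ne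
        have hτpos : 0 < (μ T).toReal := ENNReal.toReal_pos hk hTfin
        set τ := (μ T).toReal with hτ
        obtain ⟨n, hn⟩ := exists_nat_gt (c / (ε * τ))
        have hcn : c < (n:ℝ) * (ε * τ) := by
          rw [div_lt_iff₀ (by positivity)] at hn
          linarith
        set bb : EuclideanSpace ℝ (Fin d) → EuclideanSpace ℝ (Fin d) :=
          fun x => if x ∈ T then ((n:ℝ) * ‖w' x‖⁻¹) • w' x else 0 with hbb
        set aa : EuclideanSpace ℝ (Fin d) → ℝ :=
          T.indicator (fun _ => -(1/(r/(r-1)) * (n:ℝ)^(r/(r-1)))) with haa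
        have hbbnorm : ∀ x ∈ T, ‖bb x‖ = (n:ℝ) := by
          intro x hx
          have hwx : 0 < ‖w' x‖ := lt_of_lt_of_le hεpos hx.2
          simp only [hbb, if_pos hx]
          rw [norm_smul, Real.norm_eq_abs, abs_of_nonneg (by positivity),
            mul_assoc, inv_mul_cancel₀ hwx.ne', mul_one]
        have hrpnn : (0:ℝ) ≤ 1/(r/(r-1)) * (n:ℝ)^(r/(r-1)) := by
          have := Real.rpow_nonneg ((Nat.cast_nonneg n : (0:ℝ) ≤ n)) (r/(r-1))
          positivity
        refine ⟨_, ⟨aa, bb, measurable_const.indicator hTmeas,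
          Measurable.ite hTmeas ((measurable_const.mul hw'meas.norm.inv).smul hw'meas)
            measurable_const,
          ⟨(n:ℝ) + 1/(r/(r-1)) * (n:ℝ)^(r/(r-1)), ?_⟩, ?_, rfl⟩, ?_⟩
        · refine ae_of_all _ fun x => ⟨?_, ?_⟩
          · by_cases hx : x ∈ T
            · rw [haa, Set.indicator_of_mem hx, abs_neg, abs_of_nonneg hrpnn]
              have := (Nat.cast_nonneg n : (0:ℝ) ≤ n)
              linarith
            · rw [haa, Set.indicator_of_notMem hx, abs_zero]
              have := (Nat.cast_nonneg n : (0:ℝ) ≤ n)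
              linarith
          · by_cases hx : x ∈ T
            · rw [hbbnorm x hx]; linarith
            · simp only [hbb, if_neg hx, norm_zero]
              have := (Nat.cast_nonneg n : (0:ℝ) ≤ n)
              linarith
        · refine ae_of_all _ fun x => ?_
          by_cases hx : x ∈ T
          · rw [haa, Set.indicator_of_mem hx, hbbnorm x hx]
            exact le_of_eq (by ring)
          · rw [haa, Set.indicator_of_notMem hx]
            simp only [hbb, if_neg hx, norm_zero, Real.zero_rpow hr'ne, mul_zero, add_zero,
              le_refl, zero_add]
        · have hVeq : ∫ x, (aa x * m x + ⟪bb x, w x⟫) ∂μ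
              = ∫ x in T, (n:ℝ) * ‖w' x‖ ∂μ := by
            rw [← integral_indicator hTmeas]
            apply integral_congr_ae
            filter_upwards [hmm, hww] with x h1 h2
            rw [h1, h2]
            by_cases hx : x ∈ T
            · rw [Set.indicator_of_mem hx]
              simp only [haa, hbb, Set.indicator_of_mem hx, if_pos hx]
              have hwx : 0 < ‖w' x‖ := lt_of_lt_of_le hεpos hx.2
              rw [hx.1, mul_zero, zero_add, real_inner_smul_left,
                real_inner_self_eq_norm_sq]
              field_simp
            · rw [Set.indicator_of_notMem hx]
              simp only [haa, hbb, Set.indicator_of_notMem hx, if_neg hx,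
                inner_zero_left, zero_mul, add_zero]
          have hV2 : (n:ℝ) * (ε * τ) ≤ ∫ x in T, (n:ℝ) * ‖w' x‖ ∂μ := by
            have h6 : ∫ _ in T, ((n:ℝ) * ε) ∂μ ≤ ∫ x in T, (n:ℝ) * ‖w' x‖ ∂μ := by
              refine setIntegral_mono_on (integrableOn_const (measure_lt_top μ T).ne)
                ((hw'int.norm.const_mul (n:ℝ)).integrableOn) hTmeas ?_
              intro x hx
              exact mul_le_mul_of_nonneg_left hx.2 ((Nat.cast_nonneg n : (0:ℝ) ≤ n))
            rw [setIntegral_const, smul_eq_mul] at h6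
            calc (n:ℝ) * (ε * τ) = τ * ((n:ℝ) * ε) := by ring
              _ ≤ _ := h6
          refine lt_of_le_of_lt hc ?_
          rw [hVeq]
          exact EReal.coe_lt_coe_iff.2 (lt_of_lt_of_le hcn hV2)
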